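/- arXiv:2103.03843 — 4 statements merged into one kernel-verified Lean document; each statement's English description precedes it below -/
import Mathlib

section
/- Let U ⊆ ℝ³ be an open set and let d : U → ℝ be a C² function satisfying the eikonal equation ‖∇d(x)‖ = 1 for all x ∈ U. Let x ∈ U and t ∈ ℝ be such that the closed segment {x + s∇d(x) : s between 0 and t} is contained in U. Then ∇d(x + t∇d(x)) = ∇d(x) and d(x + t∇d(x)) = d(x) + t. In particular, if the segment from x to π(x) := x − d(x)∇d(x) lies in U, then d(π(x)) = 0 and ∇d(π(x)) = ∇d(x), so that x = π(x) + d(x)·n(π(x)) with n := ∇d. -/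
set_option maxHeartbeats 1000000


noncomputable section

/-- `ℝ³` as a Euclidean space. -/
abbrev E3 := EuclideanSpace ℝ (Fin 3)

open Set
open scoped RealInnerProductSpace

/-- Scalar Grönwall: forward version on `[0, b]`. -/
lemma gronwall_aux0 {p p' : ℝ → ℝ} {K b : ℝ}
    (hderiv : ∀ s ∈ Set.Icc (0:ℝ) b, HasDerivAt p (p' s) s)
    (hbound : ∀ s ∈ Set.Icc (0:ℝ) b, |p' s| ≤ K * |p s|)
    (h0 : p 0 = 0) : ∀ s ∈ Set.Icc (0:ℝ) b, p s = 0 := by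
  intro s hs
  have H := norm_le_gronwallBound_of_norm_deriv_right_le (f := p) (f' := p')
      (δ := 0) (K := K) (ε := 0) (a := 0) (b := b)
      (fun r hr => (hderiv r hr).continuousAt.continuousWithinAt)
      (fun r hr => (hderiv r (Set.Ico_subset_Icc_self hr)).hasDerivWithinAt)
      (by simp [h0])
      (fun r hr => by
        simpa [Real.norm_eq_abs] using hbound r (Set.Ico_subset_Icc_self hr))
  have := H s hs
  rw [gronwallBound_ε0_δ0] at this
  have := le_antisymm ((Real.norm_eq_abs _ ▸ this)) (abs_nonneg _)
  exact abs_eq_zero.mp this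

/-- Scalar Grönwall on `uIcc 0 t`. -/
lemma gronwall_aux {p p' : ℝ → ℝ} {K t : ℝ}
    (hderiv : ∀ s ∈ Set.uIcc (0:ℝ) t, HasDerivAt p (p' s) s)
    (hbound : ∀ s ∈ Set.uIcc (0:ℝ) t, |p' s| ≤ K * |p s|)
    (h0 : p 0 = 0) : ∀ s ∈ Set.uIcc (0:ℝ) t, p s = 0 := by
  rcases le_total 0 t with ht | ht
  · rw [Set.uIcc_of_le ht] at *
    exact gronwall_aux0 hderiv hbound h0
  · rw [Set.uIcc_of_ge ht] at *
    intro s hs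
    have hmem : ∀ r ∈ Set.Icc (0:ℝ) (-t), -r ∈ Set.Icc t (0:ℝ) := by
      intro r hr
      constructor <;> [linarith [hr.2]; linarith [hr.1]]
    have key : ∀ r ∈ Set.Icc (0:ℝ) (-t), p (-r) = 0 := by
      apply gronwall_aux0 (p' := fun r => p' (-r) * (-1)) (K := K)
      · intro r hr
        exact HasDerivAt.comp r (hderiv (-r) (hmem r hr)) (hasDerivAt_neg r)
      · intro r hr
        simpa [abs_mul] using hbound (-r) (hmem r hr)
      · simpa using h0
    have : s = -(-s) := by ring
    rw [this]
    apply key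
    constructor <;> [linarith [hs.2]; linarith [hs.1]]

theorem key_lemma (U : Set E3) (hU : IsOpen U) (d : E3 → ℝ)
    (hd : ContDiffOn ℝ 2 d U) (heik : ∀ x ∈ U, ‖gradient d x‖ = 1)
    (x : E3) (hx : x ∈ U) (t : ℝ)
    (hseg : ∀ s ∈ Set.uIcc (0 : ℝ) t, x + s • gradient d x ∈ U) :
    gradient d (x + t • gradient d x) = gradient d x ∧
    d (x + t • gradient d x) = d x + t := by
  classical
  set g : E3 → E3 := gradient d with hg_def
  -- g is C¹ on U
  have hgC1 : ContDiffOn ℝ 1 g U := by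
    have h1 : ContDiffOn ℝ 1 (fderiv ℝ d) U :=
      hd.fderiv_of_isOpen hU (by norm_num)
    have : g = (fun y => (InnerProductSpace.toDual ℝ E3).symm (fderiv ℝ d y)) := rfl
    rw [this]
    exact ((InnerProductSpace.toDual ℝ E3).symm.contDiff.comp_contDiffOn h1)
  set B : E3 → E3 →L[ℝ] E3 := fun y => fderiv ℝ g y with hB_def
  have hgdiff : ∀ y ∈ U, HasFDerivAt g (B y) y := by
    intro y hy
    exact ((hgC1.differentiableOn one_ne_zero).differentiableAt (hU.mem_nhds hy)).hasFDerivAt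
  -- symmetry of B
  have hsym : ∀ y ∈ U, ∀ w z : E3, ⟪B y w, z⟫ = ⟪B y z, w⟫ := by
    intro y hy w z
    have hsnd : IsSymmSndFDerivAt ℝ d y :=
      (hd.contDiffAt (hU.mem_nhds hy)).isSymmSndFDerivAt (by norm_num)
    have hrel : ∀ w : E3, B y w = (InnerProductSpace.toDual ℝ E3).symm
        (fderiv ℝ (fderiv ℝ d) y w) := by
      intro w
      have : g = ⇑(InnerProductSpace.toDual ℝ E3).symm ∘ (fderiv ℝ d) := rfl
      rw [hB_def]
      simp only [this, (InnerProductSpace.toDual ℝ E3).symm.comp_fderiv]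
      rfl
    rw [hrel w, hrel z, InnerProductSpace.toDual_symm_apply,
      InnerProductSpace.toDual_symm_apply]
    exact hsnd.eq w z
  -- differentiated eikonal equation
  have heikd : ∀ y ∈ U, ∀ w : E3, ⟪B y w, g y⟫ = 0 := by
    intro y hy w
    have hF1 : HasFDerivAt (fun z => ⟪g z, g z⟫)
        ((fderivInnerCLM ℝ (g y, g y)).comp ((B y).prod (B y))) y :=
      (hgdiff y hy).inner ℝ (hgdiff y hy)
    have hconst : (fun z => ⟪g z, g z⟫) =ᶠ[nhds y] fun _ => (1:ℝ) := by
      filter_upwards [hU.mem_nhds hy] with z hz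
      rw [real_inner_self_eq_norm_sq, heik z hz]; norm_num
    have hF2 : HasFDerivAt (fun z => ⟪g z, g z⟫) (0 : E3 →L[ℝ] ℝ) y :=
      (hasFDerivAt_const (1:ℝ) y).congr_of_eventuallyEq hconst
    have huniq := hF1.unique hF2
    have := ContinuousLinearMap.ext_iff.mp huniq w
    simp only [ContinuousLinearMap.comp_apply, ContinuousLinearMap.prod_apply,
      fderivInnerCLM_apply, ContinuousLinearMap.zero_apply] at this
    have h2 : ⟪g y, B y w⟫ = ⟪B y w, g y⟫ := real_inner_comm _ _
    linarith [this, h2.symm ▸ this]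
  -- the segment and derivative setup
  set n0 : E3 := g x with hn0_def
  set γ : ℝ → E3 := fun s => x + s • n0 with hγ_def
  have hγmem : ∀ s ∈ Set.uIcc (0:ℝ) t, γ s ∈ U := hseg
  have hγderiv : ∀ s : ℝ, HasDerivAt γ n0 s := by
    intro s
    have h1 : HasDerivAt (fun s : ℝ => s • n0) ((1:ℝ) • n0) s :=
      (hasDerivAt_id s).smul_const n0
    simpa only [one_smul] using h1.const_add x
  have hn1 : ‖n0‖ = 1 := heik x hx
  -- bound on B along the segment
  have hcont : ContinuousOn (fun s => B (γ s)) (Set.uIcc 0 t) := by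
    have hBcont : ContinuousOn B U := hgC1.continuousOn_fderiv_of_isOpen hU le_rfl
    exact hBcont.comp (Continuous.continuousOn (by fun_prop)) hγmem
  obtain ⟨C, hC⟩ := isCompact_uIcc.exists_bound_of_continuousOn hcont
  have hC0 : 0 ≤ C := le_trans (norm_nonneg _) (hC 0 Set.left_mem_uIcc)
  set v : ℝ → E3 := fun s => g (γ s) with hv_def
  set p : ℝ → ℝ := fun s => 1 - ⟪v s, n0⟫ with hp_def
  set p' : ℝ → ℝ := fun s => -⟪B (γ s) n0, n0⟫ with hp'_def
  have hvderiv : ∀ s ∈ Set.uIcc (0:ℝ) t, HasDerivAt v (B (γ s) n0) s := fun s hs =>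
    (hgdiff (γ s) (hγmem s hs)).comp_hasDerivAt s (hγderiv s)
  have hpderiv : ∀ s ∈ Set.uIcc (0:ℝ) t, HasDerivAt p (p' s) s := by
    intro s hs
    have h1 : HasDerivAt (fun s => ⟪v s, n0⟫) (⟪v s, (0:E3)⟫ + ⟪B (γ s) n0, n0⟫) s :=
      (hvderiv s hs).inner ℝ (hasDerivAt_const s n0)
    have h2 := h1.const_sub 1
    simpa [inner_zero_right] using h2
  have e2 : ∀ s ∈ Set.uIcc (0:ℝ) t, ‖n0 - v s‖^2 = 2 * p s := by
    intro s hs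
    rw [norm_sub_sq_real, heik _ (hγmem s hs), hn1, hp_def]
    simp only [one_pow]
    rw [real_inner_comm]
    ring
  have hkey : ∀ s ∈ Set.uIcc (0:ℝ) t, |p' s| ≤ (2*C) * |p s| := by
    intro s hs
    have hyU := hγmem s hs
    have e1 : ⟪B (γ s) n0, n0⟫ = ⟪B (γ s) (n0 - v s), n0 - v s⟫ := by
      have h1 : ⟪B (γ s) n0, v s⟫ = 0 := heikd _ hyU n0
      have h2 : ⟪B (γ s) (v s), v s⟫ = 0 := heikd _ hyU (v s)
      have h3 : ⟪B (γ s) (v s), n0⟫ = ⟪B (γ s) n0, v s⟫ := hsym _ hyU _ _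
      simp only [map_sub, inner_sub_left, inner_sub_right]
      linarith
    have hple : 0 ≤ p s := by nlinarith [sq_nonneg ‖n0 - v s‖, e2 s hs]
    have hb1 : |⟪B (γ s) (n0 - v s), n0 - v s⟫| ≤ ‖B (γ s) (n0 - v s)‖ * ‖n0 - v s‖ :=
      abs_real_inner_le_norm _ _
    have hb2 : ‖B (γ s) (n0 - v s)‖ ≤ ‖B (γ s)‖ * ‖n0 - v s‖ :=
      (B (γ s)).le_opNorm _
    have hb3 : ‖B (γ s)‖ ≤ C := hC s hs
    have habs : |p' s| = |⟪B (γ s) (n0 - v s), n0 - v s⟫| := by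
      rw [hp'_def]
      simp only [abs_neg]
      rw [e1]
    rw [habs, abs_of_nonneg hple]
    nlinarith [norm_nonneg (n0 - v s), norm_nonneg (B (γ s)), e2 s hs,
      sq_nonneg ‖n0 - v s‖]
  have hp0 : p 0 = 0 := by
    have hγ0 : γ 0 = x := by simp [hγ_def]
    simp only [hp_def, hv_def, hγ0, ← hn0_def]
    rw [real_inner_self_eq_norm_sq, hn1]
    norm_num
  have hpz := gronwall_aux hpderiv hkey hp0
  have hveq : ∀ s ∈ Set.uIcc (0:ℝ) t, v s = n0 := by
    intro s hs
    have h1 : ‖n0 - v s‖^2 = 0 := by rw [e2 s hs, hpz s hs]; ring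
    have h2 : ‖n0 - v s‖ = 0 := by
      have := abs_nonneg (‖n0 - v s‖)
      nlinarith [norm_nonneg (n0 - v s)]
    have h3 : n0 - v s = 0 := norm_eq_zero.mp h2
    have h4 : n0 = v s := by
      have := sub_eq_zero.mp h3
      exact this
    exact h4.symm
  constructor
  · exact hveq t Set.right_mem_uIcc
  · -- d (γ t) = d x + t
    have hdd : ∀ s ∈ Set.uIcc (0:ℝ) t, HasDerivAt (fun s => d (γ s)) 1 s := by
      intro s hs
      have h1 : HasGradientAt d (g (γ s)) (γ s) :=
        ((hd.contDiffAt (hU.mem_nhds (hγmem s hs))).differentiableAt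
          (by norm_num)).hasGradientAt
      have h2 := h1.hasFDerivAt.comp_hasDerivAt s (hγderiv s)
      have h3 : (InnerProductSpace.toDual ℝ E3) (g (γ s)) n0 = 1 := by
        rw [InnerProductSpace.toDual_apply_apply]
        show ⟪g (γ s), n0⟫ = 1
        rw [show g (γ s) = v s from rfl, hveq s hs, real_inner_self_eq_norm_sq, hn1]
        norm_num
      have h4 : HasDerivAt (fun s => d (γ s)) ((InnerProductSpace.toDual ℝ E3) (g (γ s)) n0) s := h2
      rw [h3] at h4
      exact h4
    have hq : ∀ s ∈ Set.uIcc (0:ℝ) t, HasDerivAt (fun s => d (γ s) - d x - s)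
        ((fun _ : ℝ => (0:ℝ)) s) s := by
      intro s hs
      have h4 : HasDerivAt (fun s => d (γ s) - d x - s) (1 - 1) s :=
        ((hdd s hs).sub_const (d x)).sub (hasDerivAt_id s)
      rw [sub_self] at h4
      exact h4
    have hq0 : d (γ 0) - d x - 0 = 0 := by
      have hγ0 : γ 0 = x := by simp [hγ_def]
      rw [hγ0]; ring
    have := gronwall_aux (K := 0) hq (fun s _ => by simp) hq0 t Set.right_mem_uIcc
    have hfin : d (γ t) - d x - t = 0 := this
    linarith

/-- Let `U ⊆ ℝ³` be open and `d : U → ℝ` a `C²` function satisfying the eikonal equation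
`‖∇d(x)‖ = 1` on `U`.  If `x ∈ U`, `t ∈ ℝ` and the segment `{x + s∇d(x) : s between 0 and t}`
lies in `U`, then `∇d(x + t∇d(x)) = ∇d(x)` and `d(x + t∇d(x)) = d(x) + t`.  In particular, if
the segment from `x` to `π(x) := x − d(x)∇d(x)` lies in `U`, then `d(π(x)) = 0`,
`∇d(π(x)) = ∇d(x)`, and `x = π(x) + d(x)·∇d(π(x))`. -/
theorem stmt_4 (U : Set E3) (hU : IsOpen U) (d : E3 → ℝ)
    (hd : ContDiffOn ℝ 2 d U) (heik : ∀ x ∈ U, ‖gradient d x‖ = 1) :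
    (∀ x ∈ U, ∀ t : ℝ,
        (∀ s ∈ Set.uIcc (0 : ℝ) t, x + s • gradient d x ∈ U) →
        gradient d (x + t • gradient d x) = gradient d x ∧
        d (x + t • gradient d x) = d x + t) ∧
    (∀ x ∈ U,
        (∀ s ∈ Set.uIcc (0 : ℝ) (-(d x)), x + s • gradient d x ∈ U) →
        d (x - d x • gradient d x) = 0 ∧
        gradient d (x - d x • gradient d x) = gradient d x ∧
        x = (x - d x • gradient d x) + d x • gradient d (x - d x • gradient d x)) := by
  refine ⟨fun x hx t hseg => key_lemma U hU d hd heik x hx t hseg, ?_⟩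
  intro x hx hseg
  obtain ⟨h1, h2⟩ := key_lemma U hU d hd heik x hx (-(d x)) hseg
  have hxe : x + (-(d x)) • gradient d x = x - d x • gradient d x := by
    rw [neg_smul, ← sub_eq_add_neg]
  rw [hxe] at h1 h2
  refine ⟨by rw [h2]; ring, h1, ?_⟩
  rw [h1]
  abel
end
end

section
/- Let U ⊆ ℝ³ be an open set and let d : U → ℝ be a C² function satisfying the eikonal equation ‖∇d(x)‖ = 1 for all x ∈ U. Define n := ∇d, P := I − n nᵀ, H := ∇²d. For a C¹ vector field u : U → ℝ³ with Jacobian Du, define the surface Jacobian ∇_Γ u := P(Du)P and the surface rate-of-strain tensor E_s(u) := ½(∇_Γ u + (∇_Γ u)ᵀ). Decompose u = Pu + (u·n)n into its tangential part u_T := Pu and normal coordinate u_N := u·n. Then at every point of U: E_s(u) = E_s(u_T) + u_N·H. -/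
noncomputable section
open Matrix

/-- View a point of `ℝ³` as a plain coordinate vector. -/
def toV (x : E3) : Fin 3 → ℝ := x

/-- View a plain coordinate vector as a point of `ℝ³`. -/
def ofV (v : Fin 3 → ℝ) : E3 := WithLp.toLp 2 v

/-- The Jacobian matrix `Du` of a vector field `u : ℝ³ → ℝ³` at `x`. -/
def jac (u : E3 → E3) (x : E3) : Matrix (Fin 3) (Fin 3) ℝ :=
  Matrix.of fun i j => toV (fderiv ℝ u x (EuclideanSpace.single j (1 : ℝ))) i

/-- The unit normal field `n := ∇d` (as a coordinate vector). -/
def nV (d : E3 → ℝ) (x : E3) : Fin 3 → ℝ := toV (gradient d x)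

/-- The orthogonal projection `P := I − n nᵀ` onto the tangent plane. -/
def Pmat (d : E3 → ℝ) (x : E3) : Matrix (Fin 3) (Fin 3) ℝ :=
  1 - vecMulVec (nV d x) (nV d x)

/-- The Weingarten map `H := ∇²d`, the Hessian of `d`. -/
def Hmat (d : E3 → ℝ) (x : E3) : Matrix (Fin 3) (Fin 3) ℝ :=
  jac (fun y => gradient d y) x

/-- The tangential (surface) gradient `∇_Γ g := P ∇g` of a scalar field. -/
def gradG (d : E3 → ℝ) (g : E3 → ℝ) (x : E3) : Fin 3 → ℝ :=
  Pmat d x *ᵥ toV (gradient g x)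

/-- The surface Jacobian `∇_Γ u := P (Du) P` of a vector field. -/
def jacG (d : E3 → ℝ) (u : E3 → E3) (x : E3) : Matrix (Fin 3) (Fin 3) ℝ :=
  Pmat d x * jac u x * Pmat d x

/-- The surface divergence `div_Γ u := tr(P (Du) P)` of a vector field. -/
def divG (d : E3 → ℝ) (u : E3 → E3) (x : E3) : ℝ := (jacG d u x).trace

/-- The surface rate-of-strain tensor `E_s(u) := ½(∇_Γ u + (∇_Γ u)ᵀ)`. -/
def Es (d : E3 → ℝ) (u : E3 → E3) (x : E3) : Matrix (Fin 3) (Fin 3) ℝ :=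
  (2⁻¹ : ℝ) • (jacG d u x + (jacG d u x)ᵀ)

/-- The scalar surface curl `curl_Γ u := div_Γ(u × n)` of a vector field. -/
def scurlG (d : E3 → ℝ) (u : E3 → E3) (x : E3) : ℝ :=
  divG d (fun y => ofV (crossProduct (toV (u y)) (nV d y))) x

/-- The vector surface curl `𝐜𝐮𝐫𝐥_Γ g := n × ∇_Γ g` of a scalar field. -/
def vcurlG (d : E3 → ℝ) (g : E3 → ℝ) (x : E3) : Fin 3 → ℝ :=
  crossProduct (nV d x) (gradG d g x)

/-- The surface divergence of a matrix field, applied row-wise: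
`div_Γ A := (div_Γ(e₁ᵀA), div_Γ(e₂ᵀA), div_Γ(e₃ᵀA))ᵀ`. -/
def divGmat (d : E3 → ℝ) (A : E3 → Matrix (Fin 3) (Fin 3) ℝ) (x : E3) : Fin 3 → ℝ :=
  fun i => divG d (fun y => ofV (fun j => A y i j)) x

/- ### Auxiliary lemmas -/

/-- Components of the Fréchet derivative of a vector field. -/
lemma fderiv_comp_proj (w : E3 → E3) {x : E3} (hw : DifferentiableAt ℝ w x)
    (i : Fin 3) (v : E3) :
    fderiv ℝ (fun y => toV (w y) i) x v = toV (fderiv ℝ w x v) i := by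
  have h : (fun y => toV (w y) i) = (EuclideanSpace.proj (𝕜 := ℝ) i) ∘ w := rfl
  rw [h, fderiv_comp x (ContinuousLinearMap.differentiableAt _) hw, ContinuousLinearMap.fderiv]
  simp [toV]

lemma grad_differentiableAt {d : E3 → ℝ} {x : E3} (h2 : ContDiffAt ℝ 2 d x) :
    DifferentiableAt ℝ (fun y => gradient d y) x := by
  have h1 : ContDiffAt ℝ 1 (fderiv ℝ d) x := h2.fderiv_right (by norm_num)
  have h : (fun y => gradient d y) =
      (fun φ => (InnerProductSpace.toDual ℝ E3).symm φ) ∘ (fderiv ℝ d) := rfl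
  rw [h]
  exact ((InnerProductSpace.toDual ℝ E3).symm.differentiable.differentiableAt).comp x
    (h1.differentiableAt one_ne_zero)

lemma Hmat_eq_sndFDeriv {d : E3 → ℝ} {x : E3} (h2 : ContDiffAt ℝ 2 d x) (i j : Fin 3) :
    Hmat d x i j
      = fderiv ℝ (fderiv ℝ d) x (EuclideanSpace.single j 1) (EuclideanSpace.single i 1) := by
  have hL : (fun y => gradient d y) =
      ((InnerProductSpace.toDual ℝ E3).symm : (E3 →L[ℝ] ℝ) → E3) ∘ (fderiv ℝ d) := rfl
  show toV (fderiv ℝ (fun y => gradient d y) x (EuclideanSpace.single j 1)) i = _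
  rw [hL, LinearIsometryEquiv.comp_fderiv]
  simp only [ContinuousLinearMap.coe_comp', Function.comp_apply,
    LinearIsometryEquiv.coe_coe]
  have := InnerProductSpace.toDual_symm_apply (𝕜 := ℝ) (E := E3)
    (x := EuclideanSpace.single i 1)
    (y := fderiv ℝ (fderiv ℝ d) x (EuclideanSpace.single j 1))
  rw [← this, EuclideanSpace.inner_single_right]
  simp [toV]

lemma Hmat_symm {d : E3 → ℝ} {x : E3} (h2 : ContDiffAt ℝ 2 d x) (i j : Fin 3) :
    Hmat d x i j = Hmat d x j i := by
  rw [Hmat_eq_sndFDeriv h2, Hmat_eq_sndFDeriv h2]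
  exact h2.isSymmSndFDerivAt (by simp [minSmoothness_of_isRCLikeNormedField]) _ _

lemma sum_sq_grad {d : E3 → ℝ} {x : E3} (h : ‖gradient d x‖ = 1) :
    ∑ i : Fin 3, toV (gradient d x) i * toV (gradient d x) i = 1 := by
  have hn : ‖gradient d x‖ ^ 2 = 1 := by rw [h]; norm_num
  rw [EuclideanSpace.norm_eq, Real.sq_sqrt (by positivity)] at hn
  simpa [toV, Real.norm_eq_abs, sq_abs, sq] using hn

lemma nn_one {d : E3 → ℝ} {x : E3} (h : ‖gradient d x‖ = 1) :
    nV d x ⬝ᵥ nV d x = 1 := by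
  simpa [dotProduct, nV] using sum_sq_grad h

lemma vecMulVec_mulVec' (a b v : Fin 3 → ℝ) :
    vecMulVec a b *ᵥ v = (b ⬝ᵥ v) • a := by
  funext i
  simp only [mulVec, vecMulVec_apply, dotProduct, Pi.smul_apply, smul_eq_mul,
    Finset.sum_mul]
  exact Finset.sum_congr rfl fun k _ => by ring

lemma mul_vecMulVec' (A : Matrix (Fin 3) (Fin 3) ℝ) (a b : Fin 3 → ℝ) :
    A * vecMulVec a b = vecMulVec (A *ᵥ a) b := by
  ext i j
  simp only [Matrix.mul_apply, vecMulVec_apply, mulVec, dotProduct, Finset.sum_mul]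
  exact Finset.sum_congr rfl fun k _ => by ring

lemma vecMulVec_mul' (a b : Fin 3 → ℝ) (A : Matrix (Fin 3) (Fin 3) ℝ) :
    vecMulVec a b * A = vecMulVec a (Aᵀ *ᵥ b) := by
  ext i j
  simp only [Matrix.mul_apply, vecMulVec_apply, mulVec, dotProduct, transpose_apply]
  rw [Finset.mul_sum]
  exact Finset.sum_congr rfl fun k _ => by ring

/-- `H ⬝ n = 0` from the eikonal equation. -/
lemma H_mulVec_n {U : Set E3} (hU : IsOpen U) {d : E3 → ℝ}
    (hd : ContDiffOn ℝ 2 d U) (heik : ∀ x ∈ U, ‖gradient d x‖ = 1)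
    {x : E3} (hx : x ∈ U) : Hmat d x *ᵥ nV d x = 0 := by
  have h2 : ContDiffAt ℝ 2 d x := hd.contDiffAt (hU.mem_nhds hx)
  have hgd : DifferentiableAt ℝ (fun y => gradient d y) x := grad_differentiableAt h2
  have hgi : ∀ i : Fin 3, DifferentiableAt ℝ (fun y => toV (gradient d y) i) x := by
    intro i
    exact ((EuclideanSpace.proj (𝕜 := ℝ) i).differentiableAt).comp x hgd
  -- the squared norm function is constant 1 near x
  have hconst : (fun y => ∑ i : Fin 3, toV (gradient d y) i * toV (gradient d y) i)
      =ᶠ[nhds x] (fun _ => (1 : ℝ)) := by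
    filter_upwards [hU.mem_nhds hx] with y hy
    exact sum_sq_grad (heik y hy)
  have hfd0 : fderiv ℝ (fun y => ∑ i : Fin 3, toV (gradient d y) i * toV (gradient d y) i) x
      = 0 := by
    rw [hconst.fderiv_eq]; exact fderiv_const_apply 1
  funext j
  have hsum : fderiv ℝ (fun y => ∑ i : Fin 3, toV (gradient d y) i * toV (gradient d y) i) x
        (EuclideanSpace.single j 1)
      = ∑ i : Fin 3, (Hmat d x i j * nV d x i + nV d x i * Hmat d x i j) := by
    rw [fderiv_fun_sum (A := fun i y => toV (gradient d y) i * toV (gradient d y) i) (fun i _ => (hgi i).mul (hgi i))]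
    simp only [ContinuousLinearMap.coe_sum', Finset.sum_apply]
    refine Finset.sum_congr rfl fun i _ => ?_
    rw [fderiv_fun_mul (hgi i) (hgi i)]
    simp only [ContinuousLinearMap.add_apply, ContinuousLinearMap.coe_smul',
      Pi.smul_apply, smul_eq_mul]
    rw [fderiv_comp_proj _ hgd]
    show toV (gradient d x) i * Hmat d x i j + toV (gradient d x) i * Hmat d x i j
        = Hmat d x i j * nV d x i + nV d x i * Hmat d x i j
    simp [nV]; ring
  rw [hfd0] at hsum
  simp only [ContinuousLinearMap.zero_apply] at hsum
  have hsum' : (0:ℝ) = 2 * ∑ i : Fin 3, nV d x i * Hmat d x i j := by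
    rw [hsum, Finset.mul_sum]
    exact Finset.sum_congr rfl fun i _ => by ring
  have h0 : ∑ i : Fin 3, nV d x i * Hmat d x i j = 0 := by linarith
  show Hmat d x j ⬝ᵥ nV d x = (0 : Fin 3 → ℝ) j
  have : Hmat d x j ⬝ᵥ nV d x = ∑ i : Fin 3, nV d x i * Hmat d x i j := by
    simp only [dotProduct]
    exact Finset.sum_congr rfl fun i _ => by rw [Hmat_symm h2 j i]; ring
  rw [this, h0]; rfl

/-- Let `U ⊆ ℝ³` be open and `d : U → ℝ` a `C²` function satisfying the eikonal equation
`‖∇d(x)‖ = 1` on `U`, with `n := ∇d`, `P := I − nnᵀ`, `H := ∇²d`.  For a `C¹` vector field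
`u : U → ℝ³`, decomposed as `u = u_T + u_N n` with tangential part `u_T := Pu` and normal
coordinate `u_N := u·n`, the surface rate-of-strain tensor satisfies, at every point of `U`,
`E_s(u) = E_s(u_T) + u_N · H`. -/
theorem stmt_6 (U : Set E3) (hU : IsOpen U) (d : E3 → ℝ)
    (hd : ContDiffOn ℝ 2 d U) (heik : ∀ x ∈ U, ‖gradient d x‖ = 1)
    (u : E3 → E3) (hu : ContDiffOn ℝ 1 u U)
    (x : E3) (hx : x ∈ U) :
    Es d u x
      = Es d (fun y => ofV (Pmat d y *ᵥ toV (u y))) x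
        + (toV (u x) ⬝ᵥ nV d x) • Hmat d x := by
  have h2 : ContDiffAt ℝ 2 d x := hd.contDiffAt (hU.mem_nhds hx)
  have hud : DifferentiableAt ℝ u x :=
    (hu.contDiffAt (hU.mem_nhds hx)).differentiableAt one_ne_zero
  have hgd : DifferentiableAt ℝ (fun y => gradient d y) x := grad_differentiableAt h2
  have hgi : ∀ i : Fin 3, DifferentiableAt ℝ (fun y => toV (gradient d y) i) x :=
    fun i => ((EuclideanSpace.proj (𝕜 := ℝ) i).differentiableAt).comp x hgd
  have hui : ∀ i : Fin 3, DifferentiableAt ℝ (fun y => toV (u y) i) x :=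
    fun i => ((EuclideanSpace.proj (𝕜 := ℝ) i).differentiableAt).comp x hud
  set uN : E3 → ℝ := fun y => toV (u y) ⬝ᵥ nV d y with huN_def
  have huN : DifferentiableAt ℝ uN x := by
    have : uN = fun y => ∑ i : Fin 3, toV (u y) i * toV (gradient d y) i := by
      funext y; simp [huN_def, dotProduct, nV]
    rw [this]
    exact DifferentiableAt.fun_sum fun i _ => (hui i).mul (hgi i)
  -- rewrite the tangential part as a smooth combination
  set uT : E3 → E3 := fun y => ofV (Pmat d y *ᵥ toV (u y)) with huT_def
  have huT_eq : uT = fun y => u y - uN y • (gradient d y) := by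
    funext y
    apply PiLp.ext
    intro i
    show (Pmat d y *ᵥ toV (u y)) i = toV (u y - uN y • gradient d y) i
    have h1 : toV (u y - uN y • gradient d y) i
        = toV (u y) i - uN y * toV (gradient d y) i := rfl
    rw [h1, Pmat, sub_mulVec, one_mulVec, vecMulVec_mulVec']
    have h2 : uN y = nV d y ⬝ᵥ toV (u y) := by
      rw [huN_def]; exact dotProduct_comm _ _
    simp only [Pi.sub_apply, Pi.smul_apply, smul_eq_mul, h2, nV]
  have huTd : DifferentiableAt ℝ uT x := by
    rw [huT_eq]; exact hud.sub (huN.smul hgd)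
  set q : Fin 3 → ℝ := fun j => fderiv ℝ uN x (EuclideanSpace.single j 1) with hq_def
  -- the Jacobian of the tangential part
  have hjacT : jac uT x
      = jac u x - vecMulVec (nV d x) q - uN x • Hmat d x := by
    ext i j
    show toV (fderiv ℝ uT x (EuclideanSpace.single j 1)) i = _
    rw [← fderiv_comp_proj uT huTd]
    have hcomp : (fun y => toV (uT y) i)
        = fun y => toV (u y) i - uN y * toV (gradient d y) i := by
      funext y; rw [huT_eq]; rfl
    rw [hcomp, fderiv_fun_sub (g := fun y => uN y * toV (gradient d y) i) (hui i) (huN.mul (hgi i))]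
    simp only [ContinuousLinearMap.coe_sub', Pi.sub_apply]
    rw [fderiv_fun_mul huN (hgi i)]
    simp only [ContinuousLinearMap.add_apply, ContinuousLinearMap.coe_smul',
      Pi.smul_apply, smul_eq_mul]
    rw [fderiv_comp_proj u hud, fderiv_comp_proj _ hgd]
    simp only [Matrix.sub_apply, Matrix.smul_apply, vecMulVec_apply, smul_eq_mul]
    have e1 : jac u x i j = toV (fderiv ℝ u x (EuclideanSpace.single j 1)) i := rfl
    have e2 : Hmat d x i j
        = toV (fderiv ℝ (fun y => gradient d y) x (EuclideanSpace.single j 1)) i := rfl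
    have e3 : nV d x i = toV (gradient d x) i := rfl
    have e4 : q j = fderiv ℝ uN x (EuclideanSpace.single j 1) := rfl
    rw [e1, e2, e3, e4]
    ring
  -- basic matrix identities
  have hneik : ‖gradient d x‖ = 1 := heik x hx
  have hPn : Pmat d x *ᵥ nV d x = 0 := by
    rw [Pmat, sub_mulVec, one_mulVec, vecMulVec_mulVec', nn_one hneik, one_smul, sub_self]
  have hHn : Hmat d x *ᵥ nV d x = 0 := H_mulVec_n hU hd heik hx
  have hHsymm : (Hmat d x)ᵀ = Hmat d x := by
    ext i j; exact Hmat_symm h2 j i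
  have hPvq : Pmat d x * vecMulVec (nV d x) q * Pmat d x = 0 := by
    rw [mul_vecMulVec', hPn]
    have : vecMulVec (0 : Fin 3 → ℝ) q = 0 := by
      ext i j; simp [vecMulVec_apply]
    rw [this, Matrix.zero_mul]
  have hNH : vecMulVec (nV d x) (nV d x) * Hmat d x = 0 := by
    rw [vecMulVec_mul', hHsymm, hHn]
    ext i j; simp [vecMulVec_apply]
  have hHN : Hmat d x * vecMulVec (nV d x) (nV d x) = 0 := by
    rw [mul_vecMulVec', hHn]
    ext i j; simp [vecMulVec_apply]
  have hPHP : Pmat d x * Hmat d x * Pmat d x = Hmat d x := by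
    rw [Pmat, sub_mul, one_mul, hNH, sub_zero, mul_sub, mul_one, hHN, sub_zero]
  -- surface Jacobian identity
  have hjacG : jacG d u x = jacG d uT x + uN x • Hmat d x := by
    rw [jacG, jacG, hjacT]
    rw [mul_sub, mul_sub, sub_mul, sub_mul, Matrix.mul_smul, Matrix.smul_mul,
      hPHP, hPvq]
    abel
  -- conclude
  have huNx : uN x = toV (u x) ⬝ᵥ nV d x := rfl
  rw [Es, Es, hjacG, ← huNx]
  rw [transpose_add, transpose_smul, hHsymm]
  module
end
end

section
/- Let U ⊆ ℝ³ be an open set and let d : U → ℝ be a C² function satisfying the eikonal equation ‖∇d(x)‖ = 1 for all x ∈ U. Define n := ∇d and P := I − n nᵀ; for a C¹ vector field w : U → ℝ³ define the surface divergence div_Γ w := tr(P(Dw)P) and the scalar surface curl curl_Γ w := div_Γ(w × n). Let g : U → ℝ be C² and define the tangential gradient ∇_Γ g := P∇g. Then at every point of U: curl_Γ(∇_Γ g) = 0, i.e. the tangential gradient of any C² scalar field has vanishing scalar surface curl. -/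
noncomputable section
open Matrix

def pd' (f : E3 → ℝ) (k : Fin 3) : E3 → ℝ := fun y => fderiv ℝ f y (EuclideanSpace.single k 1)
def Lf' (f : E3 → ℝ) (x : E3) (k : Fin 3) : E3 →L[ℝ] ℝ :=
  (fderiv ℝ (fderiv ℝ f) x).flip (EuclideanSpace.single k 1)
def A2 (f : E3 → ℝ) (x : E3) : Matrix (Fin 3) (Fin 3) ℝ :=
  Matrix.of fun j k =>
    fderiv ℝ (fderiv ℝ f) x (EuclideanSpace.single j 1) (EuclideanSpace.single k 1)
def FW (g d : E3 → ℝ) : E3 → Fin 3 → ℝ :=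
  fun y => crossProduct (fun k => pd' g k y) (fun k => pd' d k y)
def LW (g d : E3 → ℝ) (x : E3) : Fin 3 → (E3 →L[ℝ] ℝ) :=
  ![(pd' g 1 x • Lf' d x 2 + pd' d 2 x • Lf' g x 1) - (pd' g 2 x • Lf' d x 1 + pd' d 1 x • Lf' g x 2),
    (pd' g 2 x • Lf' d x 0 + pd' d 0 x • Lf' g x 2) - (pd' g 0 x • Lf' d x 2 + pd' d 2 x • Lf' g x 0),
    (pd' g 0 x • Lf' d x 1 + pd' d 1 x • Lf' g x 0) - (pd' g 1 x • Lf' d x 0 + pd' d 0 x • Lf' g x 1)]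

lemma grad_apply (f : E3 → ℝ) (y : E3) (k : Fin 3) :
    toV (gradient f y) k = pd' f k y := by
  have h1 : toV (gradient f y) k
      = @inner ℝ _ _ (gradient f y) (EuclideanSpace.single k (1:ℝ)) := by
    rw [EuclideanSpace.inner_single_right]; simp [toV]
  rw [h1, gradient]
  exact InnerProductSpace.toDual_symm_apply

lemma pd_hasFDerivAt {f : E3 → ℝ} {x : E3} (hf : ContDiffAt ℝ 2 f x) (k : Fin 3) :
    HasFDerivAt (pd' f k) (Lf' f x k) x := by
  have h2 : DifferentiableAt ℝ (fderiv ℝ f) x :=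
    (hf.fderiv_right (m := 1) (by norm_num)).differentiableAt (by norm_num)
  have h := h2.hasFDerivAt.clm_apply (hasFDerivAt_const (EuclideanSpace.single k (1:ℝ)) x)
  simp only [ContinuousLinearMap.comp_zero, zero_add] at h
  exact h

lemma FW_hasFDerivAt {g d : E3 → ℝ} {x : E3}
    (hgx : ContDiffAt ℝ 2 g x) (hdx : ContDiffAt ℝ 2 d x) :
    HasFDerivAt (FW g d) (ContinuousLinearMap.pi (LW g d x)) x := by
  apply hasFDerivAt_pi''
  intro i
  rw [ContinuousLinearMap.proj_pi]
  have hg1 := pd_hasFDerivAt hgx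
  have hd1 := pd_hasFDerivAt hdx
  fin_cases i
  · have h := ((hg1 1).mul (hd1 2)).sub ((hg1 2).mul (hd1 1))
    have hfun : (fun y => FW g d y 0) = fun y => pd' g 1 y * pd' d 2 y - pd' g 2 y * pd' d 1 y := by
      funext y; simp [FW, cross_apply]
    simp [LW, hfun]; exact h
  · have h := ((hg1 2).mul (hd1 0)).sub ((hg1 0).mul (hd1 2))
    have hfun : (fun y => FW g d y 1) = fun y => pd' g 2 y * pd' d 0 y - pd' g 0 y * pd' d 2 y := by
      funext y; simp [FW, cross_apply]
    simp [LW, hfun]; exact h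
  · have h := ((hg1 0).mul (hd1 1)).sub ((hg1 1).mul (hd1 0))
    have hfun : (fun y => FW g d y 2) = fun y => pd' g 0 y * pd' d 1 y - pd' g 1 y * pd' d 0 y := by
      funext y; simp [FW, cross_apply]
    simp [LW, hfun]; exact h

lemma ofVFW_hasFDerivAt {g d : E3 → ℝ} {x : E3}
    (hgx : ContDiffAt ℝ 2 g x) (hdx : ContDiffAt ℝ 2 d x) :
    HasFDerivAt (fun y => ofV (FW g d y))
      ((((EuclideanSpace.equiv (Fin 3) ℝ).symm : (Fin 3 → ℝ) →L[ℝ] E3)).comp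
        (ContinuousLinearMap.pi (LW g d x))) x :=
  ((EuclideanSpace.equiv (Fin 3) ℝ).symm.hasFDerivAt).comp x (FW_hasFDerivAt hgx hdx)

lemma jac_FW {g d : E3 → ℝ} {x : E3}
    (hgx : ContDiffAt ℝ 2 g x) (hdx : ContDiffAt ℝ 2 d x) (i j : Fin 3) :
    jac (fun y => ofV (FW g d y)) x i j = LW g d x i (EuclideanSpace.single j 1) := by
  show toV (fderiv ℝ (fun y => ofV (FW g d y)) x (EuclideanSpace.single j 1)) i = _
  rw [(ofVFW_hasFDerivAt hgx hdx).fderiv]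
  rfl

lemma cross_proj (n v : Fin 3 → ℝ) :
    crossProduct ((1 - vecMulVec n n) *ᵥ v) n = crossProduct v n := by
  funext i
  simp only [cross_apply, Matrix.sub_mulVec, Matrix.one_mulVec, Pi.sub_apply]
  fin_cases i <;>
    simp [Matrix.mulVec, dotProduct, Fin.sum_univ_three, vecMulVec_apply] <;> ring

lemma key (A B : Matrix (Fin 3) (Fin 3) ℝ) (N G : Fin 3 → ℝ)
    (hA : ∀ i j, A i j = A j i) (hB : ∀ i j, B i j = B j i)
    (hAN : ∀ j, A j 0 * N 0 + A j 1 * N 1 + A j 2 * N 2 = 0)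
    (M : Matrix (Fin 3) (Fin 3) ℝ)
    (hM : ∀ i j, M i j = (crossProduct (fun k => B j k) N) i + (crossProduct G (fun k => A j k)) i) :
    ((1 - vecMulVec N N) * M * (1 - vecMulVec N N)).trace = 0 := by
  have h0 := hAN 0; have h1 := hAN 1; have h2 := hAN 2
  rw [hA 1 0] at h1; rw [hA 2 0, hA 2 1] at h2
  simp only [Matrix.trace, Fin.sum_univ_three, Matrix.diag_apply, Matrix.mul_apply,
    Matrix.sub_apply, Matrix.one_apply, Matrix.vecMulVec_apply, Fin.sum_univ_three,
    hM, cross_apply, Matrix.cons_val_zero, Matrix.cons_val_one, Matrix.head_cons,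
    Matrix.cons_val_two, Matrix.tail_cons, Fin.reduceEq, if_true, if_false, reduceIte,
    hA 1 0, hA 2 0, hA 2 1, hB 1 0, hB 2 0, hB 2 1]
  linear_combination ((N 0^2 + N 1^2 + N 2^2) - 2) *
    ((N 1 * G 2 - N 2 * G 1) * h0 + (N 2 * G 0 - N 0 * G 2) * h1 + (N 0 * G 1 - N 1 * G 0) * h2)


/-- Let `U ⊆ ℝ³` be open and `d : U → ℝ` a `C²` function satisfying the eikonal equation
`‖∇d(x)‖ = 1` on `U`, with `n := ∇d` and `P := I − nnᵀ`.  For any `C²` scalar field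
`g : U → ℝ`, the tangential gradient `∇_Γ g := P∇g` has vanishing scalar surface curl at
every point of `U`:  `curl_Γ(∇_Γ g) = 0`, where `curl_Γ w := div_Γ(w × n)`. -/
theorem stmt_9 (U : Set E3) (hU : IsOpen U) (d : E3 → ℝ)
    (hd : ContDiffOn ℝ 2 d U) (heik : ∀ x ∈ U, ‖gradient d x‖ = 1)
    (g : E3 → ℝ) (hg : ContDiffOn ℝ 2 g U)
    (x : E3) (hx : x ∈ U) :
    scurlG d (fun y => ofV (gradG d g y)) x = 0 := by
  have hmem : U ∈ nhds x := hU.mem_nhds hx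
  have hdx : ContDiffAt ℝ 2 d x := hd.contDiffAt hmem
  have hgx : ContDiffAt ℝ 2 g x := hg.contDiffAt hmem
  -- eikonal, squared, pointwise on U
  have hsq : ∀ y ∈ U, pd' d 0 y * pd' d 0 y + pd' d 1 y * pd' d 1 y + pd' d 2 y * pd' d 2 y = 1 := by
    intro y hy
    have h1 : ‖gradient d y‖ = 1 := heik y hy
    rw [EuclideanSpace.norm_eq, Real.sqrt_eq_one] at h1
    have e0 : gradient d y 0 = pd' d 0 y := grad_apply d y 0
    have e1 : gradient d y 1 = pd' d 1 y := grad_apply d y 1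
    have e2 : gradient d y 2 = pd' d 2 y := grad_apply d y 2
    simp only [Fin.sum_univ_three, Real.norm_eq_abs, sq_abs, e0, e1, e2] at h1
    linear_combination h1
  -- symmetry of Hessians
  have hA : ∀ i j, A2 d x i j = A2 d x j i := fun i j =>
    (hdx.isSymmSndFDerivAt (by simp [minSmoothness_of_isRCLikeNormedField])) (EuclideanSpace.single i 1) (EuclideanSpace.single j 1)
  have hB : ∀ i j, A2 g x i j = A2 g x j i := fun i j =>
    (hgx.isSymmSndFDerivAt (by simp [minSmoothness_of_isRCLikeNormedField])) (EuclideanSpace.single i 1) (EuclideanSpace.single j 1)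
  -- orthogonality: Hessian of d annihilates the normal
  have hAN : ∀ j, A2 d x j 0 * nV d x 0 + A2 d x j 1 * nV d x 1 + A2 d x j 2 * nV d x 2 = 0 := by
    intro j
    have hpd := pd_hasFDerivAt hdx
    have hsum : HasFDerivAt
        (fun y => pd' d 0 y * pd' d 0 y + pd' d 1 y * pd' d 1 y + pd' d 2 y * pd' d 2 y)
        (((pd' d 0 x • Lf' d x 0 + pd' d 0 x • Lf' d x 0) +
          (pd' d 1 x • Lf' d x 1 + pd' d 1 x • Lf' d x 1)) +
          (pd' d 2 x • Lf' d x 2 + pd' d 2 x • Lf' d x 2)) x :=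
      (((hpd 0).mul (hpd 0)).add ((hpd 1).mul (hpd 1))).add ((hpd 2).mul (hpd 2))
    have hev : (fun y => pd' d 0 y * pd' d 0 y + pd' d 1 y * pd' d 1 y + pd' d 2 y * pd' d 2 y)
        =ᶠ[nhds x] fun _ => (1:ℝ) := by
      filter_upwards [hmem] with y hy using hsq y hy
    have h0d : HasFDerivAt
        (fun y => pd' d 0 y * pd' d 0 y + pd' d 1 y * pd' d 1 y + pd' d 2 y * pd' d 2 y)
        (0 : E3 →L[ℝ] ℝ) x := (hasFDerivAt_const (1:ℝ) x).congr_of_eventuallyEq hev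
    have huniq := hsum.unique h0d
    have happ : ((pd' d 0 x • Lf' d x 0 + pd' d 0 x • Lf' d x 0) +
          (pd' d 1 x • Lf' d x 1 + pd' d 1 x • Lf' d x 1) +
          (pd' d 2 x • Lf' d x 2 + pd' d 2 x • Lf' d x 2)) (EuclideanSpace.single j 1) = 0 := by
      rw [huniq]; rfl
    simp only [ContinuousLinearMap.add_apply, ContinuousLinearMap.smul_apply,
      Lf', ContinuousLinearMap.flip_apply, smul_eq_mul] at happ
    have eN : ∀ k, nV d x k = pd' d k x := fun k => grad_apply d x k
    rw [eN 0, eN 1, eN 2]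
    show fderiv ℝ (fderiv ℝ d) x (EuclideanSpace.single j 1) (EuclideanSpace.single 0 1) * pd' d 0 x
      + fderiv ℝ (fderiv ℝ d) x (EuclideanSpace.single j 1) (EuclideanSpace.single 1 1) * pd' d 1 x
      + fderiv ℝ (fderiv ℝ d) x (EuclideanSpace.single j 1) (EuclideanSpace.single 2 1) * pd' d 2 x = 0
    linear_combination happ / 2
  -- rewrite the vector field
  have hwfun : (fun y => ofV (crossProduct (toV (ofV (gradG d g y))) (nV d y)))
      = fun y => ofV (FW g d y) := by
    funext y
    show ofV (crossProduct ((1 - vecMulVec (nV d y) (nV d y)) *ᵥ toV (gradient g y)) (nV d y)) = _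
    rw [cross_proj]
    have h1 : toV (gradient g y) = fun k => pd' g k y := funext (grad_apply g y)
    have h2 : nV d y = fun k => pd' d k y := funext (grad_apply d y)
    rw [h1, h2]
    rfl
  show divG d (fun y => ofV (crossProduct (toV (ofV (gradG d g y))) (nV d y))) x = 0
  rw [hwfun]
  show ((1 - vecMulVec (nV d x) (nV d x)) * jac (fun y => ofV (FW g d y)) x *
    (1 - vecMulVec (nV d x) (nV d x))).trace = 0
  apply key (A2 d x) (A2 g x) (nV d x) (toV (gradient g x)) hA hB hAN
  intro i j
  rw [jac_FW hgx hdx]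
  have eN : ∀ k, nV d x k = pd' d k x := fun k => grad_apply d x k
  have eG : ∀ k, toV (gradient g x) k = pd' g k x := fun k => grad_apply g x k
  fin_cases i <;>
    simp [LW, A2, Matrix.cons_val_zero, Matrix.cons_val_one, Matrix.head_cons,
      Matrix.cons_val_two, Matrix.tail_cons, cross_apply, Matrix.of_apply,
      ContinuousLinearMap.sub_apply, ContinuousLinearMap.add_apply,
      ContinuousLinearMap.smul_apply, Lf', ContinuousLinearMap.flip_apply, smul_eq_mul,
      eN, eG] <;> ring
end
end

section
/- Let U ⊆ ℝ³ be an open convex set and let d : U → ℝ be a C² function satisfying the eikonal equation ‖∇d(x)‖ = 1 for all x ∈ U. Let x ∈ U be such that π(x) := x − d(x)∇d(x) ∈ U. Then d(π(x)) = 0, ‖x − π(x)‖ = |d(x)|, and |d(x)| = dist(x, {y ∈ U : d(y) = 0}); that is, π(x) is a closest point to x on the zero level set of d within U and |d(x)| equals the distance from x to that zero level set. -/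
noncomputable section

open Set Metric InnerProductSpace
open scoped RealInnerProductSpace Topology

namespace Stmt12Aux

/-- The inverse of the `toDual` isometry, as a continuous linear map. -/
def L : (E3 →L[ℝ] ℝ) →L[ℝ] E3 :=
  (toDual ℝ E3).symm.toContinuousLinearEquiv.toContinuousLinearMap

lemma L_apply (φ : E3 →L[ℝ] ℝ) : L φ = (toDual ℝ E3).symm φ := rfl

lemma gradient_eq (d : E3 → ℝ) : gradient d = fun z => L (fderiv ℝ d z) := rfl

lemma inner_L (φ : E3 →L[ℝ] ℝ) (w : E3) : ⟪L φ, w⟫_ℝ = φ w := by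
  rw [L_apply]
  exact toDual_symm_apply

/-- Key structural lemma: from `C²` regularity and the eikonal equation we extract the
derivative `G` of the gradient field, its continuity, and the fact that the gradient is
in the kernel of `G` (differentiated eikonal equation plus symmetry of second
derivatives). -/
lemma grad_key (U : Set E3) (hU : IsOpen U) (d : E3 → ℝ)
    (hd : ContDiffOn ℝ 2 d U) (heik : ∀ y ∈ U, ‖gradient d y‖ = 1) :
    ∃ G : E3 → E3 →L[ℝ] E3, ContinuousOn G U ∧
      (∀ y ∈ U, HasFDerivAt (gradient d) (G y) y) ∧
      (∀ y ∈ U, G y (gradient d y) = 0) := by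
  set A : E3 → E3 →L[ℝ] E3 →L[ℝ] ℝ := fun y => fderiv ℝ (fderiv ℝ d) y with hA
  refine ⟨fun y => L.comp (A y), ?_, ?_, ?_⟩
  · -- continuity
    have h1 : ContDiffOn ℝ 1 (fderiv ℝ d) U := hd.fderiv_of_isOpen hU (by norm_num)
    have h2 : ContinuousOn A U := h1.continuousOn_fderiv_of_isOpen hU le_rfl
    exact ((ContinuousLinearMap.compL ℝ E3 (E3 →L[ℝ] ℝ) E3 L).continuous).comp_continuousOn h2
  · -- derivative of the gradient
    intro y hy
    have hct : ContDiffAt ℝ 2 d y := hd.contDiffAt (hU.mem_nhds hy)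
    have h1 : ContDiffAt ℝ 1 (fderiv ℝ d) y := hct.fderiv_right (by norm_num)
    have h2 : HasFDerivAt (fderiv ℝ d) (A y) y := (h1.differentiableAt one_ne_zero).hasFDerivAt
    have := (L.hasFDerivAt).comp y h2
    rw [gradient_eq]
    exact this
  · -- kernel property
    intro y hy
    have hct : ContDiffAt ℝ 2 d y := hd.contDiffAt (hU.mem_nhds hy)
    have hsym : ∀ u w : E3, A y u w = A y w u := hct.isSymmSndFDerivAt (by simp)
    have h1 : ContDiffAt ℝ 1 (fderiv ℝ d) y := hct.fderiv_right (by norm_num)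
    have h2 : HasFDerivAt (fderiv ℝ d) (A y) y := (h1.differentiableAt one_ne_zero).hasFDerivAt
    have hF : HasFDerivAt (gradient d) (L.comp (A y)) y := by
      rw [gradient_eq]; exact (L.hasFDerivAt).comp y h2
    -- the squared norm of the gradient is constant on `U`
    have hq : HasFDerivAt (fun z => ⟪gradient d z, gradient d z⟫_ℝ)
        ((fderivInnerCLM ℝ (gradient d y, gradient d y)).comp
          ((L.comp (A y)).prod (L.comp (A y)))) y := hF.inner ℝ hF
    have hq0 : HasFDerivAt (fun z => ⟪gradient d z, gradient d z⟫_ℝ)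
        (0 : E3 →L[ℝ] ℝ) y := by
      have hconst : HasFDerivAt (fun _ : E3 => (1 : ℝ)) (0 : E3 →L[ℝ] ℝ) y :=
        hasFDerivAt_const 1 y
      apply hconst.congr_of_eventuallyEq
      filter_upwards [hU.mem_nhds hy] with z hz
      rw [real_inner_self_eq_norm_mul_norm, heik z hz]
      norm_num
    have heq := hq.unique hq0
    have hzero : ∀ u : E3, ⟪L (A y u), gradient d y⟫_ℝ = 0 := by
      intro u
      have := congrFun (congrArg (fun (φ : E3 →L[ℝ] ℝ) => (φ : E3 → ℝ)) heq) u
      simp only [ContinuousLinearMap.coe_comp', Function.comp_apply,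
        ContinuousLinearMap.prod_apply, fderivInnerCLM_apply,
        ContinuousLinearMap.zero_apply] at this
      have hcomm : ⟪gradient d y, L (A y u)⟫_ℝ =
          ⟪L (A y u), gradient d y⟫_ℝ := real_inner_comm _ _
      rw [hcomm] at this
      linarith
    -- rewrite via the bilinear form and use symmetry
    have hAzero : ∀ u : E3, A y u (gradient d y) = 0 := by
      intro u
      have := hzero u
      rwa [inner_L] at this
    have hfinal : ∀ w : E3, ⟪(L.comp (A y)) (gradient d y), w⟫_ℝ = 0 := by
      intro w
      rw [ContinuousLinearMap.comp_apply, inner_L, hsym (gradient d y) w]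
      exact hAzero w
    have := hfinal ((L.comp (A y)) (gradient d y))
    exact inner_self_eq_zero.mp this

end Stmt12Aux

open Stmt12Aux

/-- Let `U ⊆ ℝ³` be open and convex and `d : U → ℝ` a `C²` function satisfying the eikonal
equation `‖∇d(x)‖ = 1` on `U`.  If `x ∈ U` is such that `π(x) := x − d(x)∇d(x) ∈ U`, then
`d(π(x)) = 0`, `‖x − π(x)‖ = |d(x)|`, and `|d(x)| = dist(x, {y ∈ U : d(y) = 0})`;
that is, `π(x)` is a closest point to `x` on the zero level set of `d` within `U` and `|d(x)|`
equals the distance from `x` to that zero level set. -/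
theorem stmt_12 (U : Set E3) (hU : IsOpen U) (hconv : Convex ℝ U) (d : E3 → ℝ)
    (hd : ContDiffOn ℝ 2 d U) (heik : ∀ x ∈ U, ‖gradient d x‖ = 1)
    (x : E3) (hx : x ∈ U) (hπ : x - d x • gradient d x ∈ U) :
    d (x - d x • gradient d x) = 0 ∧
    ‖x - (x - d x • gradient d x)‖ = |d x| ∧
    |d x| = Metric.infDist x {y | y ∈ U ∧ d y = 0} := by
  obtain ⟨G, hGcont, hGF, hGFzero⟩ := grad_key U hU d hd heik
  set c := d x with hc
  set v := gradient d x with hv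
  set π := x - c • v with hπdef
  have hvnorm : ‖v‖ = 1 := heik x hx
  -- the segment from x to π lies in U
  have hseg : ∀ t ∈ Icc (0 : ℝ) 1, x + t • (π - x) ∈ U := fun t ht =>
    hconv.add_smul_sub_mem hx hπ ht
  set γ : ℝ → E3 := fun t => x + t • (π - x) with hγ
  have hγcont : Continuous γ := by fun_prop
  have hγt : ∀ t : ℝ, HasDerivAt γ (π - x) t := by
    intro t
    have h := ((hasDerivAt_id t).smul_const (π - x)).const_add x
    rw [one_smul] at h
    exact h
  -- continuity of the gradient field on U
  have hFcont : ContinuousOn (gradient d) U := by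
    rw [Stmt12Aux.gradient_eq]
    exact L.continuous.comp_continuousOn
      (hd.continuousOn_fderiv_of_isOpen hU (by norm_num))
  -- bound on G on the segment
  obtain ⟨M, hM0, hMb⟩ : ∃ M : ℝ, 0 ≤ M ∧ ∀ t ∈ Icc (0 : ℝ) 1, ‖G (γ t)‖ ≤ M := by
    have hcpt : IsCompact (γ '' Icc (0 : ℝ) 1) := (isCompact_Icc).image hγcont
    have hsub : γ '' Icc (0 : ℝ) 1 ⊆ U := by
      rintro _ ⟨t, ht, rfl⟩; exact hseg t ht
    obtain ⟨C, hC⟩ := hcpt.exists_bound_of_continuousOn (hGcont.mono hsub)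
    exact ⟨max C 0, le_max_right _ _, fun t ht =>
      le_trans (hC (γ t) ⟨t, ht, rfl⟩) (le_max_left _ _)⟩
  -- Gronwall argument: the gradient is constant along the segment
  set f : ℝ → E3 := fun t => gradient d (γ t) - v with hf
  have hfcont : ContinuousOn f (Icc 0 1) := by
    apply ContinuousOn.sub _ continuousOn_const
    exact hFcont.comp hγcont.continuousOn (fun t ht => hseg t ht)
  have hfderiv : ∀ t ∈ Icc (0 : ℝ) 1, HasDerivAt f (G (γ t) (π - x)) t := fun t ht =>
    ((hGF (γ t) (hseg t ht)).comp_hasDerivAt t (hγt t)).sub_const v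
  have hπx : π - x = -(c • v) := by rw [hπdef]; abel
  have hfval : ∀ t ∈ Icc (0 : ℝ) 1, G (γ t) (π - x) = c • (G (γ t)) (f t) := by
    intro t ht
    have h0 := hGFzero (γ t) (hseg t ht)
    have hvf : v = gradient d (γ t) - f t := by
      show v = gradient d (γ t) - (gradient d (γ t) - v)
      rw [sub_sub_cancel]
    rw [hπx, map_neg, map_smul, hvf, map_sub, h0]
    simp
  have hbound : ∀ t ∈ Ico (0 : ℝ) 1, ‖G (γ t) (π - x)‖ ≤ (|c| * M) * ‖f t‖ + 0 := by
    intro t ht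
    have ht' := Ico_subset_Icc_self ht
    rw [hfval t ht', add_zero, norm_smul, Real.norm_eq_abs]
    have h1 : ‖G (γ t) (f t)‖ ≤ M * ‖f t‖ :=
      le_trans ((G (γ t)).le_opNorm (f t))
        (mul_le_mul_of_nonneg_right (hMb t ht') (norm_nonneg _))
    calc |c| * ‖G (γ t) (f t)‖ ≤ |c| * (M * ‖f t‖) :=
          mul_le_mul_of_nonneg_left h1 (abs_nonneg c)
      _ = (|c| * M) * ‖f t‖ := by ring
  have hf0 : f 0 = 0 := by simp [hf, hγ, hv]
  have hfz : ∀ t ∈ Icc (0 : ℝ) 1, f t = 0 := by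
    intro t ht
    have := norm_le_gronwallBound_of_norm_deriv_right_le (f := f)
      (f' := fun t => G (γ t) (π - x)) (δ := 0) (K := |c| * M) (ε := 0)
      hfcont
      (fun s hs => (hfderiv s (Ico_subset_Icc_self hs)).hasDerivWithinAt)
      (by rw [hf0, norm_zero])
      hbound t ht
    rw [gronwallBound_ε0_δ0] at this
    simpa using le_antisymm this (norm_nonneg _)
  have hgradγ : ∀ t ∈ Icc (0 : ℝ) 1, gradient d (γ t) = v := by
    intro t ht
    have := hfz t ht
    rw [hf] at this
    exact sub_eq_zero.mp this
  -- the function t ↦ d(γ t) + t c is constant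
  set g : ℝ → ℝ := fun t => d (γ t) + t * c with hg
  have hgcont : ContinuousOn g (Icc 0 1) := by
    apply ContinuousOn.add _ (by fun_prop)
    exact (hd.continuousOn.comp hγcont.continuousOn (fun t ht => hseg t ht))
  have hgd : ∀ t ∈ Ico (0 : ℝ) 1, HasDerivWithinAt g 0 (Ici t) t := by
    intro t ht
    have ht' := Ico_subset_Icc_self ht
    have hyU := hseg t ht'
    have hdiff : DifferentiableAt ℝ d (γ t) :=
      (hd.contDiffAt (hU.mem_nhds hyU)).differentiableAt two_ne_zero
    have hdF : HasFDerivAt d (toDual ℝ E3 (gradient d (γ t))) (γ t) :=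
      hdiff.hasGradientAt.hasFDerivAt
    have h1 : HasDerivAt (fun s => d (γ s))
        ((toDual ℝ E3 (gradient d (γ t))) (π - x)) t :=
      hdF.comp_hasDerivAt t (hγt t)
    have hval : (toDual ℝ E3 (gradient d (γ t))) (π - x) = -c := by
      rw [hgradγ t ht', hπx, toDual_apply_apply, inner_neg_right, real_inner_smul_right,
        real_inner_self_eq_norm_mul_norm, hvnorm]
      ring
    rw [hval] at h1
    have h2 : HasDerivAt (fun s : ℝ => s * c) c t := by
      simpa using (hasDerivAt_id t).mul_const c
    have h3 : HasDerivAt g (-c + c) t := h1.add h2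
    rw [neg_add_cancel] at h3
    exact h3.hasDerivWithinAt
  have hgconst := constant_of_has_deriv_right_zero hgcont hgd 1 ⟨zero_le_one, le_rfl⟩
  have hγ1 : γ 1 = π := by rw [hγ]; simp
  have hγ0 : γ 0 = x := by rw [hγ]; simp
  have hdπ : d π = 0 := by
    have : d (γ 1) + 1 * c = d (γ 0) + 0 * c := hgconst
    rw [hγ1, hγ0, ← hc] at this
    linarith
  have hnorm : ‖x - π‖ = |c| := by
    rw [hπdef, sub_sub_cancel, norm_smul, Real.norm_eq_abs, hvnorm, mul_one]
  refine ⟨hdπ, by rw [hnorm], ?_⟩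
  -- the distance claim
  set S : Set E3 := {y | y ∈ U ∧ d y = 0} with hS
  have hπS : π ∈ S := ⟨hπ, hdπ⟩
  have hub : infDist x S ≤ |c| := by
    have := infDist_le_dist_of_mem (x := x) hπS
    rwa [dist_eq_norm, hnorm] at this
  have hlb : ∀ y ∈ S, |c| ≤ dist x y := by
    intro y hy
    have lip := hconv.norm_image_sub_le_of_norm_hasFDerivWithin_le
      (f := d) (f' := fun z => toDual ℝ E3 (gradient d z)) (C := 1)
      (fun z hz =>
        (((hd.contDiffAt (hU.mem_nhds hz)).differentiableAt
          two_ne_zero).hasGradientAt.hasFDerivAt).hasFDerivWithinAt)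
      (fun z hz => by
        rw [LinearIsometryEquiv.norm_map]
        exact (heik z hz).le)
      hy.1 hx
    rw [hy.2, sub_zero, Real.norm_eq_abs, ← hc, one_mul, ← dist_eq_norm] at lip
    exact lip
  have hlb' : |c| ≤ infDist x S := by
    by_contra h
    push_neg at h
    obtain ⟨y, hyS, hyd⟩ := (infDist_lt_iff ⟨π, hπS⟩).mp h
    exact absurd (hlb y hyS) (not_le.mpr hyd)
  exact le_antisymm hlb' hub
end
end
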